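/- arXiv:2508.08191 — 6 statements merged into one kernel-verified Lean document; each statement's English description precedes it below -/
import Mathlib

section
/- For the trivariate tricycle code with matrices H_X, H_Z, M_Z built from circulants A = circ(a), B = circ(b), C = circ(c), the number of logical qubits k := 3N − rank(H_X) − rank(H_Z) satisfies k = −N + dim_{𝔽₂}(ker A ∩ ker B ∩ ker C) + dim_{𝔽₂}(ker [0 C B] ∩ ker [C 0 A] ∩ ker [B A 0]), where [0 C B], [C 0 A], [B A 0] denote the N × 3N block matrices with the indicated blocks and the intersections are taken inside 𝔽₂^{3N} (respectively 𝔽₂^G for the first intersection). -/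
open Matrix

/-- `H_X = [A B C]`, an `N × 3N` matrix with columns indexed by `Fin 3 × G`,
where `A = circ(a)`, `B = circ(b)`, `C = circ(c)`. -/
def TT_HX {G : Type*} [AddCommGroup G] (a b c : G → ZMod 2) :
    Matrix G (Fin 3 × G) (ZMod 2) :=
  Matrix.of fun g p =>
    ![Matrix.circulant a, Matrix.circulant b, Matrix.circulant c] p.1 g p.2

/-- `H_Z = [[0, Cᵀ, Bᵀ], [Cᵀ, 0, Aᵀ], [Bᵀ, Aᵀ, 0]]`, a `3N × 3N` block matrix. -/
def TT_HZ {G : Type*} [AddCommGroup G] (a b c : G → ZMod 2) :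
    Matrix (Fin 3 × G) (Fin 3 × G) (ZMod 2) :=
  Matrix.of fun p q =>
    ![![0, (Matrix.circulant c)ᵀ, (Matrix.circulant b)ᵀ],
      ![(Matrix.circulant c)ᵀ, 0, (Matrix.circulant a)ᵀ],
      ![(Matrix.circulant b)ᵀ, (Matrix.circulant a)ᵀ, 0]] p.1 q.1 p.2 q.2

/-- The block matrix `[0 C B]`. -/
def TT_row1 {G : Type*} [AddCommGroup G] (a b c : G → ZMod 2) :
    Matrix G (Fin 3 × G) (ZMod 2) :=
  Matrix.of fun g p => ![0, Matrix.circulant c, Matrix.circulant b] p.1 g p.2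

/-- The block matrix `[C 0 A]`. -/
def TT_row2 {G : Type*} [AddCommGroup G] (a b c : G → ZMod 2) :
    Matrix G (Fin 3 × G) (ZMod 2) :=
  Matrix.of fun g p => ![Matrix.circulant c, 0, Matrix.circulant a] p.1 g p.2

/-- The block matrix `[B A 0]`. -/
def TT_row3 {G : Type*} [AddCommGroup G] (a b c : G → ZMod 2) :
    Matrix G (Fin 3 × G) (ZMod 2) :=
  Matrix.of fun g p => ![Matrix.circulant b, Matrix.circulant a, 0] p.1 g p.2

section Aux

open Module

set_option linter.unusedSectionVars false

variable {G : Type*} [AddCommGroup G] [Fintype G] [DecidableEq G]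

lemma circ_transpose_mulVec (a v : G → ZMod 2) (g : G) :
    (Matrix.circulant a)ᵀ.mulVec v g
      = (Matrix.circulant a).mulVec (fun h => v (-h)) (-g) := by
  rw [Matrix.transpose_circulant]
  simp only [Matrix.mulVec, dotProduct, Matrix.circulant_apply]
  refine Fintype.sum_equiv (Equiv.neg G) _ _ (fun j => ?_)
  simp [sub_eq_add_neg, add_comm]

lemma circ_transpose_ker_iff (a v : G → ZMod 2) :
    (Matrix.circulant a)ᵀ.mulVec v = 0 ↔
      (Matrix.circulant a).mulVec (fun h => v (-h)) = 0 := by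
  constructor <;> intro h <;> funext g
  · have := congrFun h (-g)
    rw [circ_transpose_mulVec, neg_neg] at this
    simpa using this
  · have := congrFun h (-g)
    simpa [circ_transpose_mulVec] using this

/-- negation equivalence on `G → ZMod 2` -/
def negLEquiv (G : Type*) [AddCommGroup G] : (G → ZMod 2) ≃ₗ[ZMod 2] (G → ZMod 2) where
  toFun v := fun g => v (-g)
  invFun v := fun g => v (-g)
  map_add' _ _ := rfl
  map_smul' _ _ := rfl
  left_inv v := by funext g; simp
  right_inv v := by funext g; simp

/-- blockwise negation equivalence on `Fin 3 × G → ZMod 2` -/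
def negLEquiv3 (G : Type*) [AddCommGroup G] :
    (Fin 3 × G → ZMod 2) ≃ₗ[ZMod 2] (Fin 3 × G → ZMod 2) where
  toFun v := fun p => v (p.1, -p.2)
  invFun v := fun p => v (p.1, -p.2)
  map_add' _ _ := rfl
  map_smul' _ _ := rfl
  left_inv v := by funext p; simp
  right_inv v := by funext p; simp

lemma hx_transpose_mulVec (a b c : G → ZMod 2) (w : G → ZMod 2) (p : Fin 3 × G) :
    (TT_HX a b c)ᵀ.mulVec w p
      = (![Matrix.circulant a, Matrix.circulant b, Matrix.circulant c] p.1)ᵀ.mulVec w p.2 := by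
  simp [TT_HX, Matrix.mulVec, dotProduct, Matrix.transpose_apply]

lemma hx_ker_map (a b c : G → ZMod 2) :
    Submodule.map ((negLEquiv G : (G → ZMod 2) ≃ₗ[ZMod 2] (G → ZMod 2)) :
        (G → ZMod 2) →ₗ[ZMod 2] (G → ZMod 2))
      (LinearMap.ker (TT_HX a b c)ᵀ.mulVecLin)
    = LinearMap.ker (Matrix.circulant a).mulVecLin ⊓
        LinearMap.ker (Matrix.circulant b).mulVecLin ⊓
        LinearMap.ker (Matrix.circulant c).mulVecLin := by
  ext v
  rw [Submodule.mem_map_equiv]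
  simp only [LinearMap.mem_ker, Submodule.mem_inf, Matrix.mulVecLin_apply]
  have key : ∀ i : Fin 3,
      ((![Matrix.circulant a, Matrix.circulant b, Matrix.circulant c] i)ᵀ.mulVec
          (fun g => v (-g)) = 0)
        ↔ (![Matrix.circulant a, Matrix.circulant b, Matrix.circulant c] i).mulVec v = 0 := by
    intro i
    have gen : ∀ d : G → ZMod 2,
        ((Matrix.circulant d)ᵀ.mulVec (fun g => v (-g)) = 0)
          ↔ (Matrix.circulant d).mulVec v = 0 := by
      intro d
      rw [circ_transpose_ker_iff]
      simp only [neg_neg]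
    fin_cases i <;> exact gen _
  constructor
  · intro h
    have h' : ∀ i : Fin 3,
        (![Matrix.circulant a, Matrix.circulant b, Matrix.circulant c] i)ᵀ.mulVec
          (fun g => v (-g)) = 0 := by
      intro i
      funext g
      have := congrFun h (i, g)
      rw [hx_transpose_mulVec] at this
      exact this
    exact ⟨⟨(key 0).mp (h' 0), (key 1).mp (h' 1)⟩, (key 2).mp (h' 2)⟩
  · rintro ⟨⟨h0, h1⟩, h2⟩
    funext p
    rw [show ((negLEquiv G).symm v) = fun g => v (-g) from rfl, hx_transpose_mulVec]
    rcases p with ⟨i, g⟩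
    have : ∀ i : Fin 3,
        (![Matrix.circulant a, Matrix.circulant b, Matrix.circulant c] i)ᵀ.mulVec
          (fun g => v (-g)) = 0 := by
      intro i
      rw [key i]
      fin_cases i <;> simpa using by first | exact h0 | exact h1 | exact h2
    simpa using congrFun (this i) g

lemma hx_rank_add (a b c : G → ZMod 2) :
    (TT_HX a b c).rank
      + finrank (ZMod 2) ↥(LinearMap.ker (Matrix.circulant a).mulVecLin ⊓
          LinearMap.ker (Matrix.circulant b).mulVecLin ⊓
          LinearMap.ker (Matrix.circulant c).mulVecLin)
      = Fintype.card G := by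
  rw [← hx_ker_map a b c, LinearEquiv.finrank_map_eq, ← Matrix.rank_transpose, Matrix.rank]
  rw [LinearMap.finrank_range_add_finrank_ker, Module.finrank_fintype_fun_eq_card]

lemma hz_mulVec (a b c : G → ZMod 2) (v : Fin 3 × G → ZMod 2) (i : Fin 3) (g : G) :
    (TT_HZ a b c).mulVec v (i, g) =
      ![(Matrix.circulant c)ᵀ.mulVec (fun h => v (1, h)) g
          + (Matrix.circulant b)ᵀ.mulVec (fun h => v (2, h)) g,
        (Matrix.circulant c)ᵀ.mulVec (fun h => v (0, h)) g
          + (Matrix.circulant a)ᵀ.mulVec (fun h => v (2, h)) g,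
        (Matrix.circulant b)ᵀ.mulVec (fun h => v (0, h)) g
          + (Matrix.circulant a)ᵀ.mulVec (fun h => v (1, h)) g] i := by
  fin_cases i <;>
    simp [TT_HZ, Matrix.mulVec, dotProduct, Fintype.sum_prod_type, Fin.sum_univ_three]

lemma row1_mulVec (a b c : G → ZMod 2) (w : Fin 3 × G → ZMod 2) (g : G) :
    (TT_row1 a b c).mulVec w g =
      (Matrix.circulant c).mulVec (fun h => w (1, h)) g
        + (Matrix.circulant b).mulVec (fun h => w (2, h)) g := by
  simp [TT_row1, Matrix.mulVec, dotProduct, Fintype.sum_prod_type, Fin.sum_univ_three]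

lemma row2_mulVec (a b c : G → ZMod 2) (w : Fin 3 × G → ZMod 2) (g : G) :
    (TT_row2 a b c).mulVec w g =
      (Matrix.circulant c).mulVec (fun h => w (0, h)) g
        + (Matrix.circulant a).mulVec (fun h => w (2, h)) g := by
  simp [TT_row2, Matrix.mulVec, dotProduct, Fintype.sum_prod_type, Fin.sum_univ_three]

lemma row3_mulVec (a b c : G → ZMod 2) (w : Fin 3 × G → ZMod 2) (g : G) :
    (TT_row3 a b c).mulVec w g =
      (Matrix.circulant b).mulVec (fun h => w (0, h)) g
        + (Matrix.circulant a).mulVec (fun h => w (1, h)) g := by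
  simp [TT_row3, Matrix.mulVec, dotProduct, Fintype.sum_prod_type, Fin.sum_univ_three]

lemma hz_E3_mulVec (a b c : G → ZMod 2) (v : Fin 3 × G → ZMod 2) (i : Fin 3) (g : G) :
    (TT_HZ a b c).mulVec (fun p => v (p.1, -p.2)) (i, g)
      = (![TT_row1 a b c, TT_row2 a b c, TT_row3 a b c] i).mulVec v (-g) := by
  fin_cases i <;>
    simp [hz_mulVec, row1_mulVec, row2_mulVec, row3_mulVec, circ_transpose_mulVec]

lemma hz_ker_map (a b c : G → ZMod 2) :
    Submodule.map ((negLEquiv3 G) :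
        (Fin 3 × G → ZMod 2) →ₗ[ZMod 2] (Fin 3 × G → ZMod 2))
      (LinearMap.ker (TT_HZ a b c).mulVecLin)
    = LinearMap.ker (TT_row1 a b c).mulVecLin ⊓
        LinearMap.ker (TT_row2 a b c).mulVecLin ⊓
        LinearMap.ker (TT_row3 a b c).mulVecLin := by
  ext v
  rw [Submodule.mem_map_equiv]
  simp only [LinearMap.mem_ker, Submodule.mem_inf, Matrix.mulVecLin_apply]
  have symm_eq : ((negLEquiv3 G).symm v) = fun p => v (p.1, -p.2) := rfl
  constructor
  · intro h
    have h' : ∀ (i : Fin 3) (g : G),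
        (![TT_row1 a b c, TT_row2 a b c, TT_row3 a b c] i).mulVec v (-g) = 0 := by
      intro i g
      have := congrFun h (i, g)
      rw [symm_eq, hz_E3_mulVec] at this
      exact this
    refine ⟨⟨?_, ?_⟩, ?_⟩ <;> funext g
    · simpa [neg_neg] using h' 0 (-g)
    · simpa [neg_neg] using h' 1 (-g)
    · simpa [neg_neg] using h' 2 (-g)
  · rintro ⟨⟨h1, h2⟩, h3⟩
    funext p
    rcases p with ⟨i, g⟩
    rw [symm_eq, hz_E3_mulVec]
    fin_cases i <;> simp [h1, h2, h3]

lemma hz_rank_add (a b c : G → ZMod 2) :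
    (TT_HZ a b c).rank
      + finrank (ZMod 2) ↥(LinearMap.ker (TT_row1 a b c).mulVecLin ⊓
          LinearMap.ker (TT_row2 a b c).mulVecLin ⊓
          LinearMap.ker (TT_row3 a b c).mulVecLin)
      = 3 * Fintype.card G := by
  rw [← hz_ker_map a b c, LinearEquiv.finrank_map_eq, Matrix.rank]
  rw [LinearMap.finrank_range_add_finrank_ker, Module.finrank_fintype_fun_eq_card]
  simp [Fintype.card_prod]

end Aux

/-- The number of logical qubits `k = 3N − rank(H_X) − rank(H_Z)` of a trivariate
tricycle code satisfies
`k = −N + dim(ker A ∩ ker B ∩ ker C) + dim(ker [0 C B] ∩ ker [C 0 A] ∩ ker [B A 0])`. -/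
theorem tt_num_logical_qubits {G : Type*} [AddCommGroup G] [Fintype G] [DecidableEq G]
    (a b c : G → ZMod 2) :
    (3 * (Fintype.card G : ℤ)) - ((TT_HX a b c).rank : ℤ) - ((TT_HZ a b c).rank : ℤ) =
      -(Fintype.card G : ℤ)
        + (Module.finrank (ZMod 2)
            ↥(LinearMap.ker (Matrix.circulant a).mulVecLin ⊓
                LinearMap.ker (Matrix.circulant b).mulVecLin ⊓
                LinearMap.ker (Matrix.circulant c).mulVecLin) : ℤ)
        + (Module.finrank (ZMod 2)
            ↥(LinearMap.ker (TT_row1 a b c).mulVecLin ⊓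
                LinearMap.ker (TT_row2 a b c).mulVecLin ⊓
                LinearMap.ker (TT_row3 a b c).mulVecLin) : ℤ) := by
  have h1 := hx_rank_add a b c
  have h2 := hz_rank_add a b c
  have e1 : ((TT_HX a b c).rank : ℤ)
      + (Module.finrank (ZMod 2)
          ↥(LinearMap.ker (Matrix.circulant a).mulVecLin ⊓
              LinearMap.ker (Matrix.circulant b).mulVecLin ⊓
              LinearMap.ker (Matrix.circulant c).mulVecLin) : ℤ)
      = (Fintype.card G : ℤ) := by exact_mod_cast h1
  have e2 : ((TT_HZ a b c).rank : ℤ)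
      + (Module.finrank (ZMod 2)
          ↥(LinearMap.ker (TT_row1 a b c).mulVecLin ⊓
              LinearMap.ker (TT_row2 a b c).mulVecLin ⊓
              LinearMap.ker (TT_row3 a b c).mulVecLin) : ℤ)
      = 3 * (Fintype.card G : ℤ) := by exact_mod_cast h2
  linarith
end

section
/- The TT code matrices satisfy the chain-complex conditions H_X · H_Zᵀ = 0 and M_Z · H_Z = 0, where H_X = [A B C], H_Z = [[0, Cᵀ, Bᵀ], [Cᵀ, 0, Aᵀ], [Bᵀ, Aᵀ, 0]], M_Z = [Aᵀ Bᵀ Cᵀ], for any circulants A = circ(a), B = circ(b), C = circ(c) over 𝔽₂ indexed by a finite additive abelian group G. -/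
open Matrix

/-- `M_Z = [Aᵀ Bᵀ Cᵀ]`. -/
def TT_MZ {G : Type*} [AddCommGroup G] (a b c : G → ZMod 2) :
    Matrix G (Fin 3 × G) (ZMod 2) :=
  Matrix.of fun g p =>
    ![(Matrix.circulant a)ᵀ, (Matrix.circulant b)ᵀ, (Matrix.circulant c)ᵀ] p.1 g p.2

set_option linter.unusedSectionVars false in
lemma conv_comm {G : Type*} [AddCommGroup G] [Fintype G]
    (u v : G → ZMod 2) (g h : G) :
    ∑ k, u (g - k) * v (k - h) = ∑ k, v (g - k) * u (k - h) := by
  have := congrFun (congrFun (Matrix.circulant_mul_comm u v) g) h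
  simpa [Matrix.mul_apply, Matrix.circulant_apply] using this

set_option linter.unusedSectionVars false in
lemma conv_comm' {G : Type*} [AddCommGroup G] [Fintype G]
    (u v : G → ZMod 2) (g h : G) :
    ∑ k, u (k - g) * v (h - k) = ∑ k, v (k - g) * u (h - k) := by
  have := conv_comm (fun x => u (-x)) (fun x => v (-x)) g h
  simpa [neg_sub] using this

/-- The TT code matrices satisfy the chain complex conditions
`H_X · H_Zᵀ = 0` and `M_Z · H_Z = 0`. -/
theorem tt_chain_complex {G : Type*} [AddCommGroup G] [Fintype G] [DecidableEq G]
    (a b c : G → ZMod 2) :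
    TT_HX a b c * (TT_HZ a b c)ᵀ = 0 ∧ TT_MZ a b c * TT_HZ a b c = 0 := by
  constructor <;>
  · ext g p
    obtain ⟨i, h⟩ := p
    fin_cases i <;>
      simp [TT_HX, TT_HZ, TT_MZ, Matrix.mul_apply, Fintype.sum_prod_type,
        Fin.sum_univ_three, Matrix.circulant_apply, Matrix.transpose_apply] <;>
      first
        | (rw [conv_comm]; exact CharTwo.add_self_eq_zero _)
        | (rw [conv_comm']; exact CharTwo.add_self_eq_zero _)
end

section
/- Let R be the G-indexed matrix over 𝔽₂ with R(i,j) = 1 iff i + j = 0, and let D_R = diag(R,R,R) be the 3N × 3N block-diagonal matrix. Then the involution v ↦ D_R v maps the set ker(M_Z) \ cs(H_Z) bijectively onto the set ker(H_X) \ rs(H_Z) and preserves Hamming weight. Consequently the meta-check distance d_M := min{|v| : v ∈ ker(M_Z) \ cs(H_Z)} equals the Z-distance d_Z := min{|v| : v ∈ ker(H_X) \ rs(H_Z)}. -/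
open Matrix

/-- Row space `rs(M)`: the span of the rows of `M`. -/
def rowSpace {m n : Type*} (M : Matrix m n (ZMod 2)) : Submodule (ZMod 2) (n → ZMod 2) :=
  Submodule.span (ZMod 2) (Set.range fun i => M i)

/-- Column space `cs(M)`: the span of the columns of `M`. -/
def colSpace {m n : Type*} (M : Matrix m n (ZMod 2)) : Submodule (ZMod 2) (m → ZMod 2) :=
  Submodule.span (ZMod 2) (Set.range fun j i => M i j)

/-- The matrix `R` with `R(i,j) = 1` iff `i + j = 0`. -/
def Rmat {G : Type*} [AddCommGroup G] [DecidableEq G] : Matrix G G (ZMod 2) :=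
  Matrix.of fun i j => if i + j = 0 then 1 else 0

/-- `D_R = diag(R, R, R)`. -/
def DRmat {G : Type*} [AddCommGroup G] [DecidableEq G] :
    Matrix (Fin 3 × G) (Fin 3 × G) (ZMod 2) :=
  Matrix.of fun p q => if p.1 = q.1 then Rmat p.2 q.2 else 0

section Aux

variable {G : Type*} [AddCommGroup G] [Fintype G] [DecidableEq G]

theorem DR_mulVec (v : Fin 3 × G → ZMod 2) :
    (DRmat (G := G)).mulVec v = fun p => v (p.1, -p.2) := by
  funext p
  have key : ∀ q : Fin 3 × G,
      DRmat p q * v q = if q = (p.1, -p.2) then v q else 0 := by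
    rintro ⟨j, h⟩
    simp only [DRmat, Rmat, Matrix.of_apply, Prod.mk.injEq]
    by_cases h1 : p.1 = j
    · by_cases h2 : p.2 + h = 0
      · have h3 : h = -p.2 := eq_neg_of_add_eq_zero_right h2
        rw [if_pos h1, if_pos h2, one_mul, if_pos ⟨h1.symm, h3⟩]
      · have h3 : ¬(h = -p.2) := fun hh => h2 (by rw [hh]; exact add_neg_cancel _)
        rw [if_pos h1, if_neg h2, zero_mul, if_neg (by tauto)]
    · rw [if_neg h1, zero_mul, if_neg (by tauto)]
  simp only [Matrix.mulVec, dotProduct]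
  rw [Finset.sum_congr rfl fun q _ => key q, Finset.sum_ite_eq' Finset.univ]
  simp

theorem DR_invol (v : Fin 3 × G → ZMod 2) :
    (DRmat (G := G)).mulVec ((DRmat (G := G)).mulVec v) = v := by
  simp [DR_mulVec]

end Aux
section Aux2

variable {G : Type*} [AddCommGroup G] [Fintype G] [DecidableEq G]

theorem DR_norm (v : Fin 3 × G → ZMod 2) :
    hammingNorm ((DRmat (G := G)).mulVec v) = hammingNorm v := by
  rw [DR_mulVec]
  simp only [hammingNorm]
  apply Finset.card_bij' (fun p _ => ((p.1 : Fin 3), -p.2))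
    (fun p _ => ((p.1 : Fin 3), -p.2))
  all_goals intro p hp
  all_goals simp_all

theorem HX_DR (a b c : G → ZMod 2) (v : Fin 3 × G → ZMod 2) (g : G) :
    (TT_HX a b c).mulVec ((DRmat (G := G)).mulVec v) g = (TT_MZ a b c).mulVec v (-g) := by
  rw [DR_mulVec]
  simp only [Matrix.mulVec, dotProduct]
  rw [← Equiv.sum_comp ((Equiv.refl (Fin 3)).prodCongr (Equiv.neg G))]
  apply Finset.sum_congr rfl
  rintro ⟨j, h⟩ _
  simp only [Equiv.prodCongr_apply, Equiv.coe_refl, Prod.map, id, Equiv.neg_apply, neg_neg]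
  congr 1
  fin_cases j <;>
    simp [TT_HX, TT_MZ, Matrix.circulant_apply, sub_neg_eq_add, add_comm]

theorem ker_iff (a b c : G → ZMod 2) (v : Fin 3 × G → ZMod 2) :
    (TT_MZ a b c).mulVec v = 0 ↔
      (TT_HX a b c).mulVec ((DRmat (G := G)).mulVec v) = 0 := by
  constructor
  · intro hv; funext g; rw [HX_DR, hv]; rfl
  · intro hv; funext g
    have := congrFun hv (-g)
    rwa [HX_DR, neg_neg] at this

theorem HZ_symm (a b c : G → ZMod 2) (p q : Fin 3 × G) :
    TT_HZ a b c (p.1, -p.2) q = TT_HZ a b c (q.1, -q.2) p := by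
  obtain ⟨i, g⟩ := p
  obtain ⟨k, h⟩ := q
  fin_cases i <;> fin_cases k <;>
    simp [TT_HZ, Matrix.circulant_apply, sub_neg_eq_add, add_comm]

theorem DR_col_row (a b c : G → ZMod 2) (q : Fin 3 × G) :
    (DRmat (G := G)).mulVec (fun p => TT_HZ a b c p q) =
      TT_HZ a b c (q.1, -q.2) := by
  funext p
  rw [DR_mulVec]
  exact HZ_symm a b c p q

theorem map_col_row (a b c : G → ZMod 2) :
    Submodule.map (Matrix.mulVecLin (DRmat (G := G))) (colSpace (TT_HZ a b c)) =
      rowSpace (TT_HZ a b c) := by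
  unfold colSpace rowSpace
  rw [Submodule.map_span]
  congr 1
  ext w
  simp only [Set.mem_image, Set.mem_range]
  constructor
  · rintro ⟨_, ⟨q, rfl⟩, rfl⟩
    exact ⟨(q.1, -q.2), by rw [Matrix.mulVecLin_apply, DR_col_row]⟩
  · rintro ⟨p, rfl⟩
    refine ⟨fun i => TT_HZ a b c i (p.1, -p.2), ⟨(p.1, -p.2), rfl⟩, ?_⟩
    rw [Matrix.mulVecLin_apply, DR_col_row]
    simp

theorem mem_iff (a b c : G → ZMod 2) (v : Fin 3 × G → ZMod 2) :
    v ∈ colSpace (TT_HZ a b c) ↔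
      (DRmat (G := G)).mulVec v ∈ rowSpace (TT_HZ a b c) := by
  rw [← map_col_row a b c]
  constructor
  · intro hv
    exact Submodule.mem_map_of_mem hv
  · rintro ⟨u, hu, he⟩
    have : u = v := by
      have := congrArg (Matrix.mulVec (DRmat (G := G))) he
      rwa [Matrix.mulVecLin_apply, DR_invol, DR_invol] at this
    rwa [← this]

end Aux2
/-- The involution `v ↦ D_R v` maps `ker(M_Z) \ cs(H_Z)` bijectively onto
`ker(H_X) \ rs(H_Z)` preserving Hamming weight; consequently the meta-check
distance `d_M` equals the `Z`-distance `d_Z`. -/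
theorem tt_metacheck_distance_eq_dZ {G : Type*} [AddCommGroup G] [Fintype G]
    [DecidableEq G] (a b c : G → ZMod 2) :
    Set.BijOn (fun v => DRmat.mulVec v)
        {v : Fin 3 × G → ZMod 2 |
          (TT_MZ a b c).mulVec v = 0 ∧ v ∉ colSpace (TT_HZ a b c)}
        {v : Fin 3 × G → ZMod 2 |
          (TT_HX a b c).mulVec v = 0 ∧ v ∉ rowSpace (TT_HZ a b c)} ∧
      (∀ v : Fin 3 × G → ZMod 2, hammingNorm (DRmat.mulVec v) = hammingNorm v) ∧
      sInf {w : ℕ | ∃ v : Fin 3 × G → ZMod 2,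
            ((TT_MZ a b c).mulVec v = 0 ∧ v ∉ colSpace (TT_HZ a b c)) ∧
              hammingNorm v = w} =
        sInf {w : ℕ | ∃ v : Fin 3 × G → ZMod 2,
            ((TT_HX a b c).mulVec v = 0 ∧ v ∉ rowSpace (TT_HZ a b c)) ∧
              hammingNorm v = w} := by
  have kerI := ker_iff a b c
  have memI := mem_iff a b c
  have srcI : ∀ v : Fin 3 × G → ZMod 2,
      ((TT_MZ a b c).mulVec v = 0 ∧ v ∉ colSpace (TT_HZ a b c)) ↔
        ((TT_HX a b c).mulVec ((DRmat (G := G)).mulVec v) = 0 ∧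
          (DRmat (G := G)).mulVec v ∉ rowSpace (TT_HZ a b c)) := by
    intro v
    rw [← kerI v]
    constructor
    · rintro ⟨h1, h2⟩; exact ⟨h1, fun hr => h2 ((memI v).mpr hr)⟩
    · rintro ⟨h1, h2⟩; exact ⟨h1, fun hc => h2 ((memI v).mp hc)⟩
  refine ⟨⟨?_, ?_, ?_⟩, DR_norm, ?_⟩
  · intro v hv
    exact (srcI v).mp hv
  · intro u _ v _ h
    have := congrArg (Matrix.mulVec (DRmat (G := G))) h
    rwa [DR_invol, DR_invol] at this
  · intro w hw
    refine ⟨(DRmat (G := G)).mulVec w, ?_, DR_invol w⟩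
    rw [Set.mem_setOf_eq, srcI, DR_invol]
    exact hw
  · congr 1
    ext n
    simp only [Set.mem_setOf_eq]
    constructor
    · rintro ⟨v, hv, rfl⟩
      exact ⟨(DRmat (G := G)).mulVec v, (srcI v).mp hv, DR_norm v⟩
    · rintro ⟨v, hv, rfl⟩
      refine ⟨(DRmat (G := G)).mulVec v, ?_, DR_norm v⟩
      rw [srcI, DR_invol]
      exact hv
end

section
/- Let A ⊆ G be a finite subset with a partition A = A_in ⊔ A_out ⊔ A_free into pairwise disjoint parts, and suppose the integrated Leibniz rule holds: for all α₁, α₂, α₃ ∈ G, |(α₁ + A) ∩ (α₂ + A_in) ∩ (α₃ + A_in)| + |(α₁ + A_out) ∩ (α₂ + A) ∩ (α₃ + A_in)| + [α₁ = α₂]·|(α₂ + A_out) ∩ (α₃ + A)| ≡ 0 (mod 2), where [α₁ = α₂] is 1 if α₁ = α₂ and 0 otherwise. Then: (i) |A_in| + |A_out| ≡ 0; (ii) for all distinct α₁, α₂ ∈ G: |(α₁ + A_in) ∩ (α₂ + A_in)| ≡ 0; (iii) for all distinct α₁, α₂ ∈ G: |(α₁ + A_out) ∩ (α₂ + A_out)|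 + |(α₁ + A_free) ∩ (α₂ + A_out)| ≡ 0; (iv) for all distinct α₁, α₂ ∈ G: |(α₁ + A_free) ∩ (α₂ + A_in)| ≡ 0; (v) for all pairwise distinct α₁, α₂, α₃ ∈ G: |(α₁ + A) ∩ (α₂ + A_in) ∩ (α₃ + A_in)| + |(α₁ + A_out) ∩ (α₂ + A) ∩ (α₃ + A_in)| ≡ 0 (all mod 2). -/
open Pointwise

/-- If a partition `A = A_in ⊔ A_out ⊔ A_free` of a finite subset of `G` satisfies
the integrated Leibniz rule for the 3-fold cup product, then the cup-product
conditions (i)–(v) hold. -/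
theorem cup_conditions_of_integrated_leibniz {G : Type*} [AddCommGroup G]
    [DecidableEq G] (A Ain Aout Afree : Finset G)
    (hd₁ : Disjoint Ain Aout) (hd₂ : Disjoint Ain Afree) (hd₃ : Disjoint Aout Afree)
    (hpart : A = Ain ∪ Aout ∪ Afree)
    (hLeib : ∀ α₁ α₂ α₃ : G,
      (((α₁ +ᵥ A) ∩ (α₂ +ᵥ Ain) ∩ (α₃ +ᵥ Ain)).card
        + ((α₁ +ᵥ Aout) ∩ (α₂ +ᵥ A) ∩ (α₃ +ᵥ Ain)).card
        + (if α₁ = α₂ then ((α₂ +ᵥ Aout) ∩ (α₃ +ᵥ A)).card else 0)) % 2 = 0) :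
    (Ain.card + Aout.card) % 2 = 0 ∧
      (∀ α₁ α₂ : G, α₁ ≠ α₂ →
        ((α₁ +ᵥ Ain) ∩ (α₂ +ᵥ Ain)).card % 2 = 0) ∧
      (∀ α₁ α₂ : G, α₁ ≠ α₂ →
        (((α₁ +ᵥ Aout) ∩ (α₂ +ᵥ Aout)).card
          + ((α₁ +ᵥ Afree) ∩ (α₂ +ᵥ Aout)).card) % 2 = 0) ∧
      (∀ α₁ α₂ : G, α₁ ≠ α₂ →
        ((α₁ +ᵥ Afree) ∩ (α₂ +ᵥ Ain)).card % 2 = 0) ∧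
      (∀ α₁ α₂ α₃ : G, α₁ ≠ α₂ → α₁ ≠ α₃ → α₂ ≠ α₃ →
        (((α₁ +ᵥ A) ∩ (α₂ +ᵥ Ain) ∩ (α₃ +ᵥ Ain)).card
          + ((α₁ +ᵥ Aout) ∩ (α₂ +ᵥ A) ∩ (α₃ +ᵥ Ain)).card) % 2 = 0) := by
  classical
  have hvi : ∀ (α : G) (X Y : Finset G), (α +ᵥ X) ∩ (α +ᵥ Y) = α +ᵥ (X ∩ Y) :=
    fun α X Y => (Finset.vadd_finset_inter).symm
  have hAinA : Ain ⊆ A := by rw [hpart]; intro x hx; simp [hx]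
  have hAoutA : Aout ⊆ A := by rw [hpart]; intro x hx; simp [hx]
  have hio : Ain ∩ Aout = ∅ := Finset.disjoint_iff_inter_eq_empty.1 hd₁
  have hoi : Aout ∩ Ain = ∅ := by rw [Finset.inter_comm]; exact hio
  -- splitting of (α +ᵥ A) ∩ S into the three pieces
  have hsplit : ∀ (α : G) (S : Finset G),
      ((α +ᵥ A) ∩ S).card
        = ((α +ᵥ Ain) ∩ S).card + ((α +ᵥ Aout) ∩ S).card + ((α +ᵥ Afree) ∩ S).card := by
    intro α S
    have hdisj : ∀ X Y : Finset G, Disjoint X Y →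
        Disjoint ((α +ᵥ X) ∩ S) ((α +ᵥ Y) ∩ S) := by
      intro X Y h
      have : (α +ᵥ X) ∩ (α +ᵥ Y) = ∅ := by
        rw [hvi, Finset.disjoint_iff_inter_eq_empty.1 h, Finset.vadd_finset_empty]
      refine Finset.disjoint_left.2 fun x hx hy => ?_
      have hx' := Finset.mem_inter.1 hx
      have hy' := Finset.mem_inter.1 hy
      have : x ∈ (α +ᵥ X) ∩ (α +ᵥ Y) := Finset.mem_inter.2 ⟨hx'.1, hy'.1⟩
      simp [‹(α +ᵥ X) ∩ (α +ᵥ Y) = ∅›] at this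
    rw [hpart, Finset.vadd_finset_union, Finset.vadd_finset_union,
      Finset.union_inter_distrib_right, Finset.union_inter_distrib_right,
      Finset.card_union_of_disjoint, Finset.card_union_of_disjoint]
    · exact hdisj _ _ hd₁
    · rw [← Finset.union_inter_distrib_right, ← Finset.vadd_finset_union]
      have : Disjoint (Ain ∪ Aout) Afree := Finset.disjoint_union_left.2 ⟨hd₂, hd₃⟩
      have h2 : (α +ᵥ (Ain ∪ Aout)) ∩ (α +ᵥ Afree) = ∅ := by
        rw [hvi, Finset.disjoint_iff_inter_eq_empty.1 this, Finset.vadd_finset_empty]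
      refine Finset.disjoint_left.2 fun x hx hy => ?_
      have hx' := Finset.mem_inter.1 hx
      have hy' := Finset.mem_inter.1 hy
      have : x ∈ (α +ᵥ (Ain ∪ Aout)) ∩ (α +ᵥ Afree) := Finset.mem_inter.2 ⟨hx'.1, hy'.1⟩
      simp [h2] at this
  -- (i)
  have part1 : (Ain.card + Aout.card) % 2 = 0 := by
    have L := hLeib 0 0 0
    simp only [if_pos rfl, if_true, zero_vadd, Finset.inter_eq_right.2 hAinA, Finset.inter_self,
      Finset.inter_eq_left.2 hAoutA, hoi, Finset.empty_inter, Finset.inter_empty,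
      Finset.card_empty, Nat.add_zero, Nat.zero_add] at L
    omega
  -- (ii)
  have part2 : ∀ α₁ α₂ : G, α₁ ≠ α₂ → ((α₁ +ᵥ Ain) ∩ (α₂ +ᵥ Ain)).card % 2 = 0 := by
    intro α₁ α₂ hne
    have L := hLeib α₁ α₂ α₁
    rw [if_neg hne] at L
    have e1 : (α₁ +ᵥ A) ∩ (α₂ +ᵥ Ain) ∩ (α₁ +ᵥ Ain) = (α₁ +ᵥ Ain) ∩ (α₂ +ᵥ Ain) := by
      rw [Finset.inter_right_comm, hvi, Finset.inter_eq_right.2 hAinA]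
    have e2 : (α₁ +ᵥ Aout) ∩ (α₂ +ᵥ A) ∩ (α₁ +ᵥ Ain) = ∅ := by
      rw [Finset.inter_right_comm, hvi, hoi, Finset.vadd_finset_empty, Finset.empty_inter]
    rw [e1, e2] at L
    simpa using L
  -- (iv)
  have part4 : ∀ α₁ α₂ : G, α₁ ≠ α₂ → ((α₁ +ᵥ Afree) ∩ (α₂ +ᵥ Ain)).card % 2 = 0 := by
    intro α₁ α₂ hne
    have L := hLeib α₁ α₂ α₂
    rw [if_neg hne] at L
    have e1 : (α₁ +ᵥ A) ∩ (α₂ +ᵥ Ain) ∩ (α₂ +ᵥ Ain) = (α₁ +ᵥ A) ∩ (α₂ +ᵥ Ain) := by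
      rw [Finset.inter_assoc, Finset.inter_self]
    have e2 : (α₁ +ᵥ Aout) ∩ (α₂ +ᵥ A) ∩ (α₂ +ᵥ Ain)
        = (α₁ +ᵥ Aout) ∩ (α₂ +ᵥ Ain) := by
      rw [Finset.inter_assoc, hvi, Finset.inter_eq_right.2 hAinA]
    rw [e1, e2, hsplit α₁ (α₂ +ᵥ Ain)] at L
    have h2 := part2 α₁ α₂ hne
    omega
  -- (iii)
  have part3 : ∀ α₁ α₂ : G, α₁ ≠ α₂ →
      (((α₁ +ᵥ Aout) ∩ (α₂ +ᵥ Aout)).card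
        + ((α₁ +ᵥ Afree) ∩ (α₂ +ᵥ Aout)).card) % 2 = 0 := by
    intro α₁ α₂ hne
    have L := hLeib α₂ α₂ α₁
    rw [if_pos rfl] at L
    have e1 : (α₂ +ᵥ A) ∩ (α₂ +ᵥ Ain) ∩ (α₁ +ᵥ Ain) = (α₂ +ᵥ Ain) ∩ (α₁ +ᵥ Ain) := by
      rw [hvi, Finset.inter_eq_right.2 hAinA]
    have e2 : (α₂ +ᵥ Aout) ∩ (α₂ +ᵥ A) ∩ (α₁ +ᵥ Ain)
        = (α₁ +ᵥ Ain) ∩ (α₂ +ᵥ Aout) := by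
      rw [hvi, Finset.inter_eq_left.2 hAoutA, Finset.inter_comm]
    have e3 : ((α₂ +ᵥ Aout) ∩ (α₁ +ᵥ A)).card
        = ((α₁ +ᵥ Ain) ∩ (α₂ +ᵥ Aout)).card + ((α₁ +ᵥ Aout) ∩ (α₂ +ᵥ Aout)).card
          + ((α₁ +ᵥ Afree) ∩ (α₂ +ᵥ Aout)).card := by
      rw [Finset.inter_comm]; exact hsplit α₁ (α₂ +ᵥ Aout)
    rw [e1, e2, e3] at L
    have h2 := part2 α₂ α₁ (Ne.symm hne)
    rw [show (α₂ +ᵥ Ain) ∩ (α₁ +ᵥ Ain) = (α₁ +ᵥ Ain) ∩ (α₂ +ᵥ Ain) from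
      Finset.inter_comm _ _] at L
    have h2' := part2 α₁ α₂ hne
    omega
  -- (v)
  have part5 : ∀ α₁ α₂ α₃ : G, α₁ ≠ α₂ → α₁ ≠ α₃ → α₂ ≠ α₃ →
      (((α₁ +ᵥ A) ∩ (α₂ +ᵥ Ain) ∩ (α₃ +ᵥ Ain)).card
        + ((α₁ +ᵥ Aout) ∩ (α₂ +ᵥ A) ∩ (α₃ +ᵥ Ain)).card) % 2 = 0 := by
    intro α₁ α₂ α₃ h12 _ _
    have L := hLeib α₁ α₂ α₃
    rw [if_neg h12] at L
    simpa using L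
  exact ⟨part1, part2, part3, part4, part5⟩
end

section
/- Suppose the supports of a, b, c : G → 𝔽₂ are all nonempty, and suppose the subgroup of G generated by the set of differences {a₁ − a₂ : a₁, a₂ ∈ supp(a)} ∪ {b₁ − b₂ : b₁, b₂ ∈ supp(b)} ∪ {c₁ − c₂ : c₁, c₂ ∈ supp(c)} is all of G. Then the Tanner graph of the TT code defined by (a, b, c) is connected. -/
open Matrix

/-- The Tanner graph of the TT code: vertices are the disjoint union of the
X-checks (`G`), the Z-checks (`Fin 3 × G`) and the qubits (`Fin 3 × G`); an
X-check `r` is adjacent to a qubit `q` iff `H_X r q = 1`, a Z-check `s` is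
adjacent to a qubit `q` iff `H_Z s q = 1`, and there are no other edges. -/
def tannerGraph {G : Type*} [AddCommGroup G] (a b c : G → ZMod 2) :
    SimpleGraph (G ⊕ ((Fin 3 × G) ⊕ (Fin 3 × G))) :=
  SimpleGraph.fromRel fun u v =>
    match u, v with
    | Sum.inl r, Sum.inr (Sum.inr q) => TT_HX a b c r q = 1
    | Sum.inr (Sum.inl s), Sum.inr (Sum.inr q) => TT_HZ a b c s q = 1
    | _, _ => False

section Aux
variable {G : Type*} [AddCommGroup G] {a b c : G → ZMod 2}

lemma tt_adj_X (i : Fin 3) (r q : G) (h : ![a, b, c] i (r - q) = 1) :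
    (tannerGraph a b c).Adj (Sum.inl r) (Sum.inr (Sum.inr (i, q))) := by
  refine ⟨by simp, Or.inl ?_⟩
  fin_cases i <;> simpa [TT_HX, Matrix.circulant_apply] using h

lemma tt_adj_Z (i j : Fin 3) (s q : G)
    (h : ![![(0 : G → ZMod 2), c, b], ![c, 0, a], ![b, a, 0]] i j (q - s) = 1) :
    (tannerGraph a b c).Adj (Sum.inr (Sum.inl (i, s))) (Sum.inr (Sum.inr (j, q))) := by
  refine ⟨by simp, Or.inl ?_⟩
  fin_cases i <;> fin_cases j <;>
    simpa [TT_HZ, Matrix.circulant_apply] using h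

lemma tt_X_reach (d : G)
    (hd : d ∈ ({d : G | ∃ x y, a x = 1 ∧ a y = 1 ∧ d = x - y} ∪
          {d : G | ∃ x y, b x = 1 ∧ b y = 1 ∧ d = x - y} ∪
          {d : G | ∃ x y, c x = 1 ∧ c y = 1 ∧ d = x - y})) (r : G) :
    (tannerGraph a b c).Reachable (Sum.inl r) (Sum.inl (r + d)) := by
  have key : ∀ (i : Fin 3) (x y : G), ![a, b, c] i x = 1 → ![a, b, c] i y = 1 →
      d = x - y → (tannerGraph a b c).Reachable (Sum.inl r) (Sum.inl (r + d)) := by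
    intro i x y hx hy hxy
    have h1 := tt_adj_X (a := a) (b := b) (c := c) i r (r - y) (by simpa using hy)
    have h2 := tt_adj_X (a := a) (b := b) (c := c) i (r + d) (r - y)
      (by rw [hxy]; simpa [show r + (x - y) - (r - y) = x by abel] using hx)
    exact h1.reachable.trans h2.reachable.symm
  rcases hd with (⟨x, y, hx, hy, hxy⟩ | ⟨x, y, hx, hy, hxy⟩) | ⟨x, y, hx, hy, hxy⟩
  · exact key 0 x y (by simpa using hx) (by simpa using hy) hxy
  · exact key 1 x y (by simpa using hx) (by simpa using hy) hxy
  · exact key 2 x y (by simpa using hx) (by simpa using hy) hxy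

end Aux

/-- If the supports of `a`, `b`, `c` are nonempty and the differences of support
elements generate `G`, then the Tanner graph of the TT code is connected. -/
theorem tt_tanner_connected {G : Type*} [AddCommGroup G] [Fintype G]
    [DecidableEq G] (a b c : G → ZMod 2)
    (ha : ∃ x, a x = 1) (hb : ∃ x, b x = 1) (hc : ∃ x, c x = 1)
    (hgen : AddSubgroup.closure
        ({d : G | ∃ x y, a x = 1 ∧ a y = 1 ∧ d = x - y} ∪
          {d : G | ∃ x y, b x = 1 ∧ b y = 1 ∧ d = x - y} ∪
          {d : G | ∃ x y, c x = 1 ∧ c y = 1 ∧ d = x - y}) = ⊤) :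
    (tannerGraph a b c).Connected := by
  obtain ⟨xa, hxa⟩ := ha
  obtain ⟨xb, hxb⟩ := hb
  obtain ⟨xc, hxc⟩ := hc
  set Γ := tannerGraph a b c with hΓ
  -- the set of shifts d such that inl r is reachable from inl (r+d), a subgroup
  set S : AddSubgroup G :=
    { carrier := {d | ∀ r, Γ.Reachable (Sum.inl r) (Sum.inl (r + d))}
      zero_mem' := fun r => by simpa using SimpleGraph.Reachable.refl (Sum.inl r : _)
      add_mem' := by
        intro d e hd he r
        have := (hd r).trans (he (r + d))
        simpa [add_assoc] using this
      neg_mem' := by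
        intro d hd r
        have := (hd (r - d)).symm
        simpa [sub_add_cancel, sub_eq_add_neg] using this } with hS
  have hSle : ∀ d : G, d ∈ S := by
    intro d
    have : S = ⊤ := top_le_iff.mp (hgen ▸ AddSubgroup.closure_le S |>.mpr
      (fun x hx r => tt_X_reach x hx r))
    simp [this]
  -- all X-checks reachable from inl 0
  have hX : ∀ r : G, Γ.Reachable (Sum.inl 0) (Sum.inl r) := by
    intro r
    simpa using hSle r 0
  -- all qubits reachable from inl 0
  have hQ : ∀ (i : Fin 3) (q : G), Γ.Reachable (Sum.inl 0) (Sum.inr (Sum.inr (i, q))) := by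
    intro i q
    have key : ∀ x : G, ![a, b, c] i x = 1 →
        Γ.Reachable (Sum.inl 0) (Sum.inr (Sum.inr (i, q))) := fun x hx =>
      (hX (x + q)).trans (tt_adj_X i (x + q) q (by simpa using hx)).reachable
    fin_cases i
    · exact key xa (by simpa using hxa)
    · exact key xb (by simpa using hxb)
    · exact key xc (by simpa using hxc)
  constructor
  · intro u v
    have base : ∀ w, Γ.Reachable (Sum.inl 0) w := by
      rintro (r | ⟨i, s⟩ | ⟨i, q⟩)
      · exact hX r
      · fin_cases i
        · exact (hQ 1 (s + xc)).trans
            (tt_adj_Z 0 1 s (s + xc) (by simpa using hxc)).reachable.symm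
        · exact (hQ 0 (s + xc)).trans
            (tt_adj_Z 1 0 s (s + xc) (by simpa using hxc)).reachable.symm
        · exact (hQ 0 (s + xb)).trans
            (tt_adj_Z 2 0 s (s + xb) (by simpa using hxb)).reachable.symm
      · exact hQ i q
    exact (base u).symm.trans (base v)
end

section
/- Suppose f, g, h, j ∈ 𝔽₂[G] satisfy a⋆f = b⋆f = c⋆f = 0 and c⋆h + b⋆j = c⋆g + a⋆j = b⋆g + a⋆h = 0. Define, for α ∈ G, the X-type operators X̄⁽¹⁾_α := X(δ_α⋆f, 0, 0), X̄⁽²⁾_α := X(δ_α⋆g, δ_α⋆h, δ_α⋆j), X̄⁽³⁾_α := X(0, 0, δ_α⋆f), and the Z-type operators Z̄⁽¹⁾_α := Z(δ_α⋆reflect(h), δ_α⋆reflect(g), 0), Z̄⁽²⁾_α := Z(0, δ_α⋆reflect(f), 0), Z̄⁽³⁾_α := Z(0, δ_α⋆reflect(j), δ_α⋆reflect(h)). Then for all α, β, γ ∈ G: (1) each X̄⁽ⁱ⁾_α (i = 1, 2, 3) has even overlap with each of the Z-check generators Z_a(γ) := Z(0, reflect(c)⋆δ_γ, reflect(b)⋆δ_γ),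 Z_b(γ) := Z(reflect(c)⋆δ_γ, 0, reflect(a)⋆δ_γ), Z_c(γ) := Z(reflect(b)⋆δ_γ, reflect(a)⋆δ_γ, 0); (2) each Z̄⁽ⁱ⁾_α (i = 1, 2, 3) has even overlap with each X-check generator X(γ) := X(a⋆δ_γ, b⋆δ_γ, c⋆δ_γ); and (3) for all i ≠ j, X̄⁽ⁱ⁾_α has even overlap with Z̄⁽ʲ⁾_β. Hence the X̄⁽ⁱ⁾ and Z̄⁽ⁱ⁾ commute with the full stabilizer group of the TT code, and operators from different logical sets mutually commute. -/
/-- Convolution of functions `G → 𝔽₂`: `(P ⋆ Q)(x) = ∑_y P(y)·Q(x − y)`. -/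
def conv {G : Type*} [AddCommGroup G] [Fintype G] (P Q : G → ZMod 2) : G → ZMod 2 :=
  fun x => ∑ y, P y * Q (x - y)

/-- `reflect(P)(x) = P(−x)`, corresponding to the transpose `Pᵀ`. -/
def reflect {G : Type*} [Neg G] (P : G → ZMod 2) : G → ZMod 2 :=
  fun x => P (-x)

/-- The indicator function `δ_α` of `α ∈ G`. -/
def delta {G : Type*} [DecidableEq G] (α : G) : G → ZMod 2 :=
  fun x => if x = α then 1 else 0

/-- The data of a (three-block) Pauli operator: three support polynomials, one for
each of the three blocks of qubits indexed by `G`. -/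
def Pauli3 (G : Type*) : Type _ :=
  (G → ZMod 2) × (G → ZMod 2) × (G → ZMod 2)

/-- The X-type operator `X(P,Q,S)` and the Z-type operator `Z(P̄,Q̄,S̄)` have even
overlap (i.e. commute) iff `(P⋆reflect(P̄) + Q⋆reflect(Q̄) + S⋆reflect(S̄))(0) = 0`. -/
def evenOverlap {G : Type*} [AddCommGroup G] [Fintype G] (X Z : Pauli3 G) : Prop :=
  conv X.1 (reflect Z.1) 0 + conv X.2.1 (reflect Z.2.1) 0
    + conv X.2.2 (reflect Z.2.2) 0 = 0

/-- `X̄⁽¹⁾_α = X(δ_α⋆f, 0, 0)`. -/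
def Xbar1 {G : Type*} [AddCommGroup G] [Fintype G] [DecidableEq G]
    (f : G → ZMod 2) (α : G) : Pauli3 G :=
  (conv (delta α) f, 0, 0)

/-- `X̄⁽²⁾_α = X(δ_α⋆g, δ_α⋆h, δ_α⋆j)`. -/
def Xbar2 {G : Type*} [AddCommGroup G] [Fintype G] [DecidableEq G]
    (g h j : G → ZMod 2) (α : G) : Pauli3 G :=
  (conv (delta α) g, conv (delta α) h, conv (delta α) j)

/-- `X̄⁽³⁾_α = X(0, 0, δ_α⋆f)`. -/
def Xbar3 {G : Type*} [AddCommGroup G] [Fintype G] [DecidableEq G]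
    (f : G → ZMod 2) (α : G) : Pauli3 G :=
  (0, 0, conv (delta α) f)

/-- `Z̄⁽¹⁾_α = Z(δ_α⋆hᵀ, δ_α⋆gᵀ, 0)`. -/
def Zbar1 {G : Type*} [AddCommGroup G] [Fintype G] [DecidableEq G]
    (g h : G → ZMod 2) (α : G) : Pauli3 G :=
  (conv (delta α) (reflect h), conv (delta α) (reflect g), 0)

/-- `Z̄⁽²⁾_α = Z(0, δ_α⋆fᵀ, 0)`. -/
def Zbar2 {G : Type*} [AddCommGroup G] [Fintype G] [DecidableEq G]
    (f : G → ZMod 2) (α : G) : Pauli3 G :=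
  (0, conv (delta α) (reflect f), 0)

/-- `Z̄⁽³⁾_α = Z(0, δ_α⋆jᵀ, δ_α⋆hᵀ)`. -/
def Zbar3 {G : Type*} [AddCommGroup G] [Fintype G] [DecidableEq G]
    (h j : G → ZMod 2) (α : G) : Pauli3 G :=
  (0, conv (delta α) (reflect j), conv (delta α) (reflect h))

/-- The `Z_a`-check generator `Z_a(γ) = Z(0, cᵀ⋆δ_γ, bᵀ⋆δ_γ)`. -/
def ZcheckA {G : Type*} [AddCommGroup G] [Fintype G] [DecidableEq G]
    (b c : G → ZMod 2) (γ : G) : Pauli3 G :=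
  (0, conv (reflect c) (delta γ), conv (reflect b) (delta γ))

/-- The `Z_b`-check generator `Z_b(γ) = Z(cᵀ⋆δ_γ, 0, aᵀ⋆δ_γ)`. -/
def ZcheckB {G : Type*} [AddCommGroup G] [Fintype G] [DecidableEq G]
    (a c : G → ZMod 2) (γ : G) : Pauli3 G :=
  (conv (reflect c) (delta γ), 0, conv (reflect a) (delta γ))

/-- The `Z_c`-check generator `Z_c(γ) = Z(bᵀ⋆δ_γ, aᵀ⋆δ_γ, 0)`. -/
def ZcheckC {G : Type*} [AddCommGroup G] [Fintype G] [DecidableEq G]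
    (a b : G → ZMod 2) (γ : G) : Pauli3 G :=
  (conv (reflect b) (delta γ), conv (reflect a) (delta γ), 0)

/-- The X-check generator `X(γ) = X(a⋆δ_γ, b⋆δ_γ, c⋆δ_γ)`. -/
def Xcheck {G : Type*} [AddCommGroup G] [Fintype G] [DecidableEq G]
    (a b c : G → ZMod 2) (γ : G) : Pauli3 G :=
  (conv a (delta γ), conv b (delta γ), conv c (delta γ))


set_option linter.unusedSectionVars false

section TTAux
variable {G : Type*} [AddCommGroup G] [Fintype G] [DecidableEq G]

lemma conv_comm'_s16 (P Q : G → ZMod 2) : conv P Q = conv Q P := by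
  funext x
  exact Fintype.sum_equiv (Equiv.subLeft x) _ _
    (fun y => by simp [Equiv.subLeft, sub_sub_cancel, mul_comm])

lemma sum_eval (P Q : G → ZMod 2) (u v : G) :
    ∑ y, P (y - u) * Q (v - y) = conv P Q (v - u) := by
  unfold conv
  refine Fintype.sum_equiv (Equiv.subRight u) _ _ (fun y => ?_)
  have h : v - u - (y - u) = v - y := by abel
  simp [Equiv.subRight, h]

lemma conv_zero_reflect (X Z : G → ZMod 2) : conv X (reflect Z) 0 = ∑ y, X y * Z y := by
  simp [conv, reflect]

lemma delta_conv_apply (P : G → ZMod 2) (u y : G) : conv (delta u) P y = P (y - u) := by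
  simp [conv, delta, ite_mul]

lemma conv_delta_apply (P : G → ZMod 2) (v y : G) : conv P (delta v) y = P (y - v) := by
  rw [conv_comm'_s16]
  exact delta_conv_apply P v y

lemma overlap1 (P Q : G → ZMod 2) (u v : G) :
    conv (conv (delta u) P) (reflect (conv (reflect Q) (delta v))) 0 = conv P Q (v - u) := by
  rw [conv_zero_reflect, ← sum_eval]
  refine Fintype.sum_congr _ _ (fun y => ?_)
  rw [delta_conv_apply, conv_delta_apply]
  simp [reflect, neg_sub]

lemma overlap2 (P Q : G → ZMod 2) (u v : G) :
    conv (conv P (delta v)) (reflect (conv (delta u) (reflect Q))) 0 = conv P Q (u - v) := by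
  rw [conv_zero_reflect, ← sum_eval]
  refine Fintype.sum_congr _ _ (fun y => ?_)
  rw [conv_delta_apply, delta_conv_apply]
  simp [reflect, neg_sub]

lemma overlap3 (P Q : G → ZMod 2) (u v : G) :
    conv (conv (delta u) P) (reflect (conv (delta v) (reflect Q))) 0 = conv P Q (v - u) := by
  rw [conv_zero_reflect, ← sum_eval]
  refine Fintype.sum_congr _ _ (fun y => ?_)
  rw [delta_conv_apply, delta_conv_apply]
  simp [reflect, neg_sub]

lemma conv_zero_left (P : G → ZMod 2) (x : G) : conv 0 P x = 0 := by simp [conv]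
lemma conv_zero_right (P : G → ZMod 2) (x : G) : conv P 0 x = 0 := by simp [conv]
lemma reflect_zero' : reflect (0 : G → ZMod 2) = 0 := rfl

end TTAux

/-- Given `f, g, h, j` with `a⋆f = b⋆f = c⋆f = 0` and
`c⋆h + b⋆j = c⋆g + a⋆j = b⋆g + a⋆h = 0`, the three logical sets
`(X̄⁽ⁱ⁾, Z̄⁽ⁱ⁾)` commute with the full stabilizer group of the TT code, and
operators from different logical sets mutually commute. -/
theorem tt_logical_sets {G : Type*} [AddCommGroup G] [Fintype G] [DecidableEq G]
    (a b c f g h j : G → ZMod 2)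
    (hfa : conv a f = 0) (hfb : conv b f = 0) (hfc : conv c f = 0)
    (h₁ : conv c h + conv b j = 0) (h₂ : conv c g + conv a j = 0)
    (h₃ : conv b g + conv a h = 0) :
    ∀ α β γ : G,
      -- (1) each X̄⁽ⁱ⁾_α has even overlap with every Z-check generator
      (evenOverlap (Xbar1 f α) (ZcheckA b c γ) ∧
        evenOverlap (Xbar1 f α) (ZcheckB a c γ) ∧
        evenOverlap (Xbar1 f α) (ZcheckC a b γ) ∧
        evenOverlap (Xbar2 g h j α) (ZcheckA b c γ) ∧
        evenOverlap (Xbar2 g h j α) (ZcheckB a c γ) ∧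
        evenOverlap (Xbar2 g h j α) (ZcheckC a b γ) ∧
        evenOverlap (Xbar3 f α) (ZcheckA b c γ) ∧
        evenOverlap (Xbar3 f α) (ZcheckB a c γ) ∧
        evenOverlap (Xbar3 f α) (ZcheckC a b γ)) ∧
      -- (2) each Z̄⁽ⁱ⁾_α has even overlap with every X-check generator
      (evenOverlap (Xcheck a b c γ) (Zbar1 g h α) ∧
        evenOverlap (Xcheck a b c γ) (Zbar2 f α) ∧
        evenOverlap (Xcheck a b c γ) (Zbar3 h j α)) ∧
      -- (3) operators from different logical sets mutually commute
      (evenOverlap (Xbar1 f α) (Zbar2 f β) ∧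
        evenOverlap (Xbar1 f α) (Zbar3 h j β) ∧
        evenOverlap (Xbar2 g h j α) (Zbar1 g h β) ∧
        evenOverlap (Xbar2 g h j α) (Zbar3 h j β) ∧
        evenOverlap (Xbar3 f α) (Zbar1 g h β) ∧
        evenOverlap (Xbar3 f α) (Zbar2 f β)) := by
  intro α β γ
  refine ⟨⟨?_, ?_, ?_, ?_, ?_, ?_, ?_, ?_, ?_⟩, ⟨?_, ?_, ?_⟩, ?_, ?_, ?_, ?_, ?_, ?_⟩
  · simp [evenOverlap, Xbar1, ZcheckA, conv_zero_left, conv_zero_right, reflect_zero']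
  · simp only [evenOverlap, Xbar1, ZcheckB, overlap1, reflect_zero', conv_zero_left,
      conv_zero_right, add_zero, zero_add]
    rw [conv_comm'_s16 f c]
    simpa using congrFun hfc (γ - α)
  · simp only [evenOverlap, Xbar1, ZcheckC, overlap1, reflect_zero', conv_zero_left,
      conv_zero_right, add_zero, zero_add]
    rw [conv_comm'_s16 f b]
    simpa using congrFun hfb (γ - α)
  · simp only [evenOverlap, Xbar2, ZcheckA, overlap1, reflect_zero', conv_zero_left,
      conv_zero_right, add_zero, zero_add]
    rw [conv_comm'_s16 h c, conv_comm'_s16 j b]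
    simpa using congrFun h₁ (γ - α)
  · simp only [evenOverlap, Xbar2, ZcheckB, overlap1, reflect_zero', conv_zero_left,
      conv_zero_right, add_zero, zero_add]
    rw [conv_comm'_s16 g c, conv_comm'_s16 j a]
    simpa using congrFun h₂ (γ - α)
  · simp only [evenOverlap, Xbar2, ZcheckC, overlap1, reflect_zero', conv_zero_left,
      conv_zero_right, add_zero, zero_add]
    rw [conv_comm'_s16 g b, conv_comm'_s16 h a]
    simpa using congrFun h₃ (γ - α)
  · simp only [evenOverlap, Xbar3, ZcheckA, overlap1, reflect_zero', conv_zero_left,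
      conv_zero_right, add_zero, zero_add]
    rw [conv_comm'_s16 f b]
    simpa using congrFun hfb (γ - α)
  · simp only [evenOverlap, Xbar3, ZcheckB, overlap1, reflect_zero', conv_zero_left,
      conv_zero_right, add_zero, zero_add]
    rw [conv_comm'_s16 f a]
    simpa using congrFun hfa (γ - α)
  · simp [evenOverlap, Xbar3, ZcheckC, conv_zero_left, conv_zero_right, reflect_zero']
  · simp only [evenOverlap, Xcheck, Zbar1, overlap2, reflect_zero', conv_zero_left,
      conv_zero_right, add_zero, zero_add]
    rw [add_comm]
    simpa using congrFun h₃ (α - γ)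
  · simp only [evenOverlap, Xcheck, Zbar2, overlap2, reflect_zero', conv_zero_left,
      conv_zero_right, add_zero, zero_add]
    simpa using congrFun hfb (α - γ)
  · simp only [evenOverlap, Xcheck, Zbar3, overlap2, reflect_zero', conv_zero_left,
      conv_zero_right, add_zero, zero_add]
    rw [add_comm]
    simpa using congrFun h₁ (α - γ)
  · simp [evenOverlap, Xbar1, Zbar2, conv_zero_left, conv_zero_right, reflect_zero']
  · simp [evenOverlap, Xbar1, Zbar3, conv_zero_left, conv_zero_right, reflect_zero']
  · simp only [evenOverlap, Xbar2, Zbar1, overlap3, reflect_zero', conv_zero_left,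
      conv_zero_right, add_zero, zero_add]
    rw [conv_comm'_s16 h g]
    exact CharTwo.add_self_eq_zero _
  · simp only [evenOverlap, Xbar2, Zbar3, overlap3, reflect_zero', conv_zero_left,
      conv_zero_right, add_zero, zero_add]
    rw [conv_comm'_s16 j h]
    exact CharTwo.add_self_eq_zero _
  · simp [evenOverlap, Xbar3, Zbar1, conv_zero_left, conv_zero_right, reflect_zero']
  · simp [evenOverlap, Xbar3, Zbar2, conv_zero_left, conv_zero_right, reflect_zero']
end
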